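/- arXiv:2101.03770 — 5 statements merged into one kernel-verified Lean document; each statement's English description precedes it below -/
import Mathlib

section
/- Let b, β, c > 0 be real numbers with bβ < 1, fix q ∈ ℝ, and let r be the unique real number with r = tanh(β(q + br)). Then every differentiable function p : [0, ∞) → ℝ satisfying the mean field Glauber equation ṗ(t) = c·( −p(t) + tanh(β(q + b·p(t))) ) for all t ≥ 0 tends to r as t → +∞. -/
open Filter

private lemma tanh_hasDerivAt (x : ℝ) :
    HasDerivAt Real.tanh (1 / Real.cosh x ^ 2) x := by
  have hc : Real.cosh x ≠ 0 := (Real.cosh_pos x).ne'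
  have h := (Real.hasDerivAt_sinh x).div (Real.hasDerivAt_cosh x) hc
  have heq : (Real.cosh x * Real.cosh x - Real.sinh x * Real.sinh x) / Real.cosh x ^ 2
      = 1 / Real.cosh x ^ 2 := by
    have := Real.cosh_sq_sub_sinh_sq x
    field_simp
    nlinarith [Real.cosh_sq_sub_sinh_sq x]
  have hfun : (fun y => Real.sinh y / Real.cosh y) = Real.tanh := by
    funext y; rw [Real.tanh_eq_sinh_div_cosh]
  rw [show (Real.sinh / Real.cosh) = Real.tanh from hfun, heq] at h
  exact h

private lemma tanh_lip (x y : ℝ) : |Real.tanh x - Real.tanh y| ≤ |x - y| := by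
  have key : ∀ z ∈ (Set.univ : Set ℝ), HasDerivWithinAt Real.tanh
      (1 / Real.cosh z ^ 2) Set.univ z :=
    fun z _ => (tanh_hasDerivAt z).hasDerivWithinAt
  have hbound : ∀ z ∈ (Set.univ : Set ℝ), ‖1 / Real.cosh z ^ 2‖ ≤ 1 := by
    intro z _
    have h1 : (1:ℝ) ≤ Real.cosh z := Real.one_le_cosh z
    have h2 : (1:ℝ) ≤ Real.cosh z ^ 2 := by nlinarith
    rw [Real.norm_eq_abs, abs_of_nonneg (by positivity)]
    rw [div_le_one (by positivity)]
    exact h2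
  have := Convex.norm_image_sub_le_of_norm_hasDerivWithin_le key hbound convex_univ
    (Set.mem_univ y) (Set.mem_univ x)
  simpa [Real.norm_eq_abs] using this

/-- Case A (`bβ < 1`): every solution `p : [0,∞) → ℝ` of the mean field Glauber
equation `ṗ = c(-p + tanh (β (q + b p)))` converges, as `t → +∞`, to the unique
solution `r` of the self-consistency equation `r = tanh (β (q + b r))`. -/
theorem glauber_relaxation_caseA (b β c q r : ℝ) (hb : 0 < b) (hβ : 0 < β)
    (hc : 0 < c) (h : b * β < 1) (hr : r = Real.tanh (β * (q + b * r)))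
    (p : ℝ → ℝ)
    (hp : ∀ t ∈ Set.Ici (0 : ℝ), HasDerivWithinAt p
      (c * (-(p t) + Real.tanh (β * (q + b * p t)))) (Set.Ici 0) t) :
    Tendsto p atTop (nhds r) := by
  set k : ℝ := 2 * c * (1 - b * β) with hkdef
  have hk : 0 < k := by
    have : 0 < 1 - b * β := by linarith
    positivity
  set e : ℝ → ℝ := fun t => p t - r with hedef
  set d : ℝ → ℝ := fun t => c * (-(p t) + Real.tanh (β * (q + b * p t))) with hddef
  -- key pointwise dissipation inequality
  have key : ∀ t, k * e t ^ 2 + 2 * (e t * d t) ≤ 0 := by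
    intro t
    have hlip := tanh_lip (β * (q + b * p t)) (β * (q + b * r))
    have harg : β * (q + b * p t) - β * (q + b * r) = β * b * (p t - r) := by ring
    rw [harg, abs_mul, abs_of_nonneg (by positivity : (0:ℝ) ≤ β * b)] at hlip
    have hed : e t * d t ≤ -(c * (1 - b * β)) * e t ^ 2 := by
      have h1 : e t * (Real.tanh (β * (q + b * p t)) - Real.tanh (β * (q + b * r)))
          ≤ β * b * e t ^ 2 := by
        calc e t * (Real.tanh (β * (q + b * p t)) - Real.tanh (β * (q + b * r)))
            ≤ |e t| * |Real.tanh (β * (q + b * p t)) - Real.tanh (β * (q + b * r))| := by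
              rw [← abs_mul]; exact le_abs_self _
          _ ≤ |e t| * (β * b * |p t - r|) := by
              apply mul_le_mul_of_nonneg_left hlip (abs_nonneg _)
          _ = β * b * e t ^ 2 := by
              simp only [hedef]
              rw [show |p t - r| * (β * b * |p t - r|) = β * b * (|p t - r| * |p t - r|) by ring,
                abs_mul_abs_self]
              ring
      have hd2 : d t = c * (-(e t) + (Real.tanh (β * (q + b * p t))
          - Real.tanh (β * (q + b * r)))) := by
        simp only [hddef, hedef]
        rw [← hr]; ring
      rw [hd2]
      nlinarith [sq_nonneg (e t)]
    nlinarith [sq_nonneg (e t)]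
  -- continuity and differentiability
  have hcont : ContinuousOn p (Set.Ici 0) := fun t ht => (hp t ht).continuousWithinAt
  have hderiv : ∀ t ∈ Set.Ioi (0:ℝ), HasDerivAt p (d t) t := by
    intro t ht
    exact (hp t (Set.mem_Ici.mpr (le_of_lt ht))).hasDerivAt (Ici_mem_nhds ht)
  set g : ℝ → ℝ := fun t => Real.exp (k * t) * e t ^ 2 with hgdef
  have hgd : ∀ t ∈ Set.Ioi (0:ℝ), HasDerivAt g
      (k * Real.exp (k * t) * e t ^ 2 + Real.exp (k * t) * (2 * e t * d t)) t := by
    intro t ht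
    have he' : HasDerivAt e (d t) t := (hderiv t ht).sub_const r
    have h1 : HasDerivAt (fun s => Real.exp (k * s)) (Real.exp (k * t) * k) t := by
      have := (Real.hasDerivAt_exp (k * t)).comp t
        ((hasDerivAt_id t).const_mul k)
      simpa [Function.comp_def] using this
    have h2 : HasDerivAt (fun s => e s ^ 2) (2 * e t * d t) t := by
      have := he'.pow 2
      exact (he'.pow 2).congr_deriv (by norm_num [mul_comm])
    have := h1.mul h2
    exact this.congr_deriv (by ring)
  have hganti : AntitoneOn g (Set.Ici 0) := by
    apply antitoneOn_of_deriv_nonpos (convex_Ici 0)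
    · exact ((Real.continuous_exp.comp (continuous_const.mul continuous_id)).continuousOn).mul
        (((hcont.sub continuousOn_const).pow 2))
    · rw [interior_Ici]
      intro t ht
      exact (hgd t ht).differentiableAt.differentiableWithinAt
    · rw [interior_Ici]
      intro t ht
      rw [(hgd t ht).deriv]
      have := key t
      nlinarith [Real.exp_pos (k * t), sq_nonneg (e t)]
  -- bound: e t ^ 2 ≤ e 0 ^ 2 * exp (-(k*t))
  have hbound : ∀ t : ℝ, 0 ≤ t → |e t| ≤ |e 0| * Real.exp (-(k / 2) * t) := by
    intro t ht
    have hg0 : g t ≤ g 0 := hganti (Set.mem_Ici.mpr le_rfl) ht ht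
    have hg0' : Real.exp (k * t) * e t ^ 2 ≤ e 0 ^ 2 := by
      simpa [hgdef] using hg0
    have hB : (0:ℝ) ≤ |e 0| * Real.exp (-(k / 2) * t) := by positivity
    have hsq : e t ^ 2 ≤ (|e 0| * Real.exp (-(k / 2) * t)) ^ 2 := by
      have hexp : (|e 0| * Real.exp (-(k / 2) * t)) ^ 2
          = e 0 ^ 2 * Real.exp (-(k * t)) := by
        have harg2 : -(k / 2) * t + -(k / 2) * t = -(k * t) := by ring
        rw [mul_pow, sq_abs, pow_two (Real.exp (-(k / 2) * t)), ← Real.exp_add, harg2]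
      rw [hexp]
      have hpos : (0:ℝ) < Real.exp (k * t) := Real.exp_pos _
      rw [Real.exp_neg]
      calc e t ^ 2 = (Real.exp (k * t) * e t ^ 2) * (Real.exp (k*t))⁻¹ := by
            field_simp
        _ ≤ e 0 ^ 2 * (Real.exp (k*t))⁻¹ := by
            apply mul_le_mul_of_nonneg_right hg0' (by positivity)
    calc |e t| = Real.sqrt (e t ^ 2) := (Real.sqrt_sq_eq_abs _).symm
      _ ≤ Real.sqrt ((|e 0| * Real.exp (-(k / 2) * t)) ^ 2) := Real.sqrt_le_sqrt hsq
      _ = |e 0| * Real.exp (-(k / 2) * t) := by rw [Real.sqrt_sq hB]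
  -- convergence
  have hBtend : Tendsto (fun t => |e 0| * Real.exp (-(k / 2) * t)) atTop (nhds 0) := by
    have h1 : Tendsto (fun t : ℝ => -(k / 2) * t) atTop atBot := by
      apply tendsto_id.const_mul_atTop_of_neg
      linarith
    have h2 : Tendsto (fun t : ℝ => Real.exp (-(k / 2) * t)) atTop (nhds 0) :=
      Real.tendsto_exp_atBot.comp h1
    simpa using h2.const_mul (|e 0|)
  have hetend : Tendsto e atTop (nhds 0) := by
    apply squeeze_zero_norm' _ hBtend
    filter_upwards [eventually_ge_atTop (0:ℝ)] with t ht
    simpa [Real.norm_eq_abs] using hbound t ht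
  have : Tendsto (fun t => e t + r) atTop (nhds (0 + r)) := hetend.add_const r
  simpa [hedef] using this
end

section
/- Let b, β > 0 be real numbers with bβ > 1. Then there exists a real number a > 0 such that: for every q with |q| > a, the equation p = tanh(β(q + bp)) has exactly one real solution p, and for every q with |q| < a, it has exactly three real solutions. -/
open Real Set

noncomputable def artanh' (y : ℝ) : ℝ := Real.log ((1+y)/(1-y)) / 2

lemma tanh_eq' (x : ℝ) : Real.tanh x = (Real.exp (2*x) - 1)/(Real.exp (2*x) + 1) := by
  rw [Real.tanh_eq_sinh_div_cosh, Real.sinh_eq, Real.cosh_eq, two_mul, Real.exp_add,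
    Real.exp_neg]
  have h1 : Real.exp x ≠ 0 := (Real.exp_pos x).ne'
  have h2 : (0:ℝ) < Real.exp x * Real.exp x + 1 := by positivity
  field_simp

lemma tanh_lt_one' (x : ℝ) : Real.tanh x < 1 := by
  rw [tanh_eq']
  have h : (0:ℝ) < Real.exp (2*x) + 1 := by positivity
  rw [div_lt_one h]; linarith

lemma neg_one_lt_tanh' (x : ℝ) : -1 < Real.tanh x := by
  rw [tanh_eq']
  have h : (0:ℝ) < Real.exp (2*x) + 1 := by positivity
  rw [lt_div_iff₀ h]
  have := Real.exp_pos (2*x)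
  linarith

lemma artanh_tanh' (x : ℝ) : artanh' (Real.tanh x) = x := by
  rw [tanh_eq', artanh']
  have hE : (0:ℝ) < Real.exp (2*x) := Real.exp_pos _
  have h : (0:ℝ) < Real.exp (2*x) + 1 := by positivity
  have e : (1 + (Real.exp (2*x) - 1) / (Real.exp (2*x) + 1)) /
      (1 - (Real.exp (2*x) - 1) / (Real.exp (2*x) + 1)) = Real.exp (2*x) := by
    field_simp
    ring
  rw [e, Real.log_exp]; ring

lemma tanh_artanh' {y : ℝ} (h1 : -1 < y) (h2 : y < 1) : Real.tanh (artanh' y) = y := by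
  have hu : (0:ℝ) < (1+y)/(1-y) := div_pos (by linarith) (by linarith)
  rw [tanh_eq', artanh']
  have e : 2 * (Real.log ((1+y)/(1-y)) / 2) = Real.log ((1+y)/(1-y)) := by ring
  rw [e, Real.exp_log hu]
  have h1y : (1:ℝ) - y ≠ 0 := by linarith
  have hd : (1+y)/(1-y) + 1 ≠ 0 := by
    have e2 : (1+y)/(1-y) + 1 = 2/(1-y) := by field_simp; ring
    rw [e2]; positivity
  field_simp
  ring

lemma artanh_neg' (y : ℝ) : artanh' (-y) = - artanh' y := by
  rw [artanh', artanh',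
    show (1 + -y)/(1 - -y) = ((1+y)/(1-y))⁻¹ by rw [inv_div]; ring_nf,
    Real.log_inv]
  ring

lemma hasDerivAt_artanh' {y : ℝ} (h1 : -1 < y) (h2 : y < 1) :
    HasDerivAt artanh' (1/(1-y^2)) y := by
  have d1 : HasDerivAt (fun z : ℝ => Real.log (1+z)) (1/(1+y)) y := by
    simpa using (((hasDerivAt_id y).const_add 1).log (ne_of_gt (by simp only [id_eq]; linarith)))
  have d2 : HasDerivAt (fun z : ℝ => Real.log (1-z)) ((-1)/(1-y)) y := by
    simpa using (((hasDerivAt_id y).const_sub 1).log (ne_of_gt (by simp only [id_eq]; linarith)))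
  have hd := (d1.sub d2).div_const 2
  have e1 : (1:ℝ)+y ≠ 0 := by linarith
  have e2 : (1:ℝ)-y ≠ 0 := by linarith
  have e3 : (1:ℝ)-y^2 ≠ 0 := by nlinarith
  have heq : (1/(1+y) - (-1)/(1-y))/2 = 1/(1-y^2) := by
    field_simp
    ring
  rw [heq] at hd
  refine hd.congr_of_eventuallyEq ?_
  have hmem : Ioo (-1:ℝ) 1 ∈ nhds y := isOpen_Ioo.mem_nhds ⟨h1, h2⟩
  filter_upwards [hmem] with z hz
  rw [artanh', Real.log_div (by linarith [hz.1]) (by linarith [hz.2])]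
  rfl

noncomputable def Gfun (b β p : ℝ) : ℝ := artanh' p / β - b * p

lemma Gfun_hasDerivAt (b β : ℝ) {p : ℝ} (h1 : -1 < p) (h2 : p < 1) :
    HasDerivAt (Gfun b β) (1/(1-p^2)/β - b) p := by
  have hd := ((hasDerivAt_artanh' h1 h2).div_const β).sub ((hasDerivAt_id p).const_mul b)
  have e : Gfun b β = fun x => artanh' x / β - b * id x := by funext x; simp [Gfun]
  rw [mul_one] at hd; rw [e]; exact hd

lemma Gfun_neg (b β p : ℝ) : Gfun b β (-p) = -(Gfun b β p) := by
  unfold Gfun; rw [artanh_neg']; ring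

lemma key_iff (b β : ℝ) (hβ : 0 < β) (p q : ℝ) :
    p = Real.tanh (β*(q+b*p)) ↔ (-1 < p ∧ p < 1 ∧ Gfun b β p = q) := by
  constructor
  · intro hp
    have h1 : -1 < p := by rw [hp]; exact neg_one_lt_tanh' _
    have h2 : p < 1 := by rw [hp]; exact tanh_lt_one' _
    refine ⟨h1, h2, ?_⟩
    have e : artanh' p = β*(q+b*p) := by nth_rewrite 1 [hp]; rw [artanh_tanh']
    unfold Gfun
    rw [e]; field_simp
    ring
  · rintro ⟨h1, h2, hG⟩
    have e : β*(q+b*p) = artanh' p := by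
      rw [← hG]; unfold Gfun; field_simp; ring
    rw [e, tanh_artanh' h1 h2]

/-- Case B (`bβ > 1`) of the mean field Ising model: there is `a > 0` such that
the self-consistency equation `p = tanh (β (q + b p))` has exactly one real
solution when `|q| > a`, and exactly three real solutions when `|q| < a`. -/
theorem self_consistency_phase_transition (b β : ℝ) (hb : 0 < b) (hβ : 0 < β)
    (h : 1 < b * β) :
    ∃ a : ℝ, 0 < a ∧
      (∀ q : ℝ, a < |q| → ∃! p : ℝ, p = Real.tanh (β * (q + b * p))) ∧
      (∀ q : ℝ, |q| < a → ∃ p₁ p₂ p₃ : ℝ, p₁ < p₂ ∧ p₂ < p₃ ∧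
        p₁ = Real.tanh (β * (q + b * p₁)) ∧
        p₂ = Real.tanh (β * (q + b * p₂)) ∧
        p₃ = Real.tanh (β * (q + b * p₃)) ∧
        ∀ p : ℝ, p = Real.tanh (β * (q + b * p)) → p = p₁ ∨ p = p₂ ∨ p = p₃) := by
  have hβ' : β ≠ 0 := hβ.ne'
  have hbβ : 0 < b*β := by positivity
  set c : ℝ := Real.sqrt (1 - 1/(b*β)) with hcdef
  have harg : 0 < 1 - 1/(b*β) := by
    rw [sub_pos, div_lt_one hbβ]; exact h
  have hc0 : 0 < c := Real.sqrt_pos.mpr harg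
  have hcsq : c^2 = 1 - 1/(b*β) := Real.sq_sqrt harg.le
  have hinv : 0 < 1/(b*β) := by positivity
  have hc1 : c < 1 := by nlinarith
  set G : ℝ → ℝ := Gfun b β with hGdef
  have hderiv : ∀ p : ℝ, -1 < p → p < 1 → HasDerivAt G (1/(1-p^2)/β - b) p :=
    fun p h1 h2 => Gfun_hasDerivAt b β h1 h2
  have hcont : ∀ p : ℝ, -1 < p → p < 1 → ContinuousAt G p :=
    fun p h1 h2 => (hderiv p h1 h2).continuousAt
  -- derivative sign
  have hderivpos : ∀ p : ℝ, -1 < p → p < 1 → c < |p| → 0 < deriv G p := by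
    intro p h1 h2 hcp
    rw [(hderiv p h1 h2).deriv]
    have hp2 : c^2 < p^2 := by
      have := sq_abs p
      nlinarith [abs_nonneg p]
    have h1p : 0 < 1 - p^2 := by nlinarith
    have hlt : 1 - p^2 < 1/(b*β) := by linarith [hcsq, hp2]
    rw [sub_pos, div_div, lt_div_iff₀ (by positivity : (0:ℝ) < (1-p^2)*β)]
    have h3 := mul_lt_mul_of_pos_left hlt hbβ
    rw [mul_one_div, div_self hbβ.ne'] at h3
    nlinarith
  have hderivneg : ∀ p : ℝ, -1 < p → p < 1 → |p| < c → deriv G p < 0 := by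
    intro p h1 h2 hcp
    rw [(hderiv p h1 h2).deriv]
    have hp2 : p^2 < c^2 := by
      have := sq_abs p
      nlinarith [abs_nonneg p]
    have h1p : 0 < 1 - p^2 := by nlinarith
    have hlt : 1/(b*β) < 1 - p^2 := by linarith [hcsq, hp2]
    rw [sub_neg, div_div, div_lt_iff₀ (by positivity : (0:ℝ) < (1-p^2)*β)]
    have h3 := mul_lt_mul_of_pos_left hlt hbβ
    rw [mul_one_div, div_self hbβ.ne'] at h3
    nlinarith
  -- monotonicity on branches
  have mono1 : StrictMonoOn G (Ioc (-1:ℝ) (-c)) := by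
    apply strictMonoOn_of_deriv_pos (convex_Ioc _ _)
    · exact fun x hx => (hcont x hx.1 (by linarith [hx.2] : x < 1)).continuousWithinAt
    · intro x hx
      rw [interior_Ioc] at hx
      exact hderivpos x hx.1 (by linarith [hx.2]) (by rw [abs_of_neg (by linarith [hx.2])]; linarith [hx.2])
  have anti : StrictAntiOn G (Icc (-c) c) := by
    apply strictAntiOn_of_deriv_neg (convex_Icc _ _)
    · exact fun x hx => (hcont x (by linarith [hx.1]) (by linarith [hx.2])).continuousWithinAt
    · intro x hx
      rw [interior_Icc] at hx
      exact hderivneg x (by linarith [hx.1]) (by linarith [hx.2]) (abs_lt.mpr ⟨hx.1, hx.2⟩)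
  have mono2 : StrictMonoOn G (Ico c 1) := by
    apply strictMonoOn_of_deriv_pos (convex_Ico _ _)
    · exact fun x hx => (hcont x (by linarith [hx.1]) hx.2).continuousWithinAt
    · intro x hx
      rw [interior_Ico] at hx
      exact hderivpos x (by linarith [hx.1]) hx.2 (by rw [abs_of_pos (by linarith [hx.1])]; exact hx.1)
  have hG0 : G 0 = 0 := by simp [hGdef, Gfun, artanh']
  have hGneg : ∀ p, G (-p) = - G p := fun p => Gfun_neg b β p
  set a : ℝ := G (-c) with hadef
  have ha0 : 0 < a := by
    have := anti (show (-c:ℝ) ∈ Icc (-c) c by constructor <;> linarith)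
      (show (0:ℝ) ∈ Icc (-c) c by constructor <;> linarith)
      (by linarith : -c < 0)
    rw [hG0] at this
    exact this
  have hGc : G c = -a := by
    have := hGneg c
    rw [← hadef] at this
    linarith
  -- bound: G p ≤ a for p ∈ (-1, c]
  have hub : ∀ p, -1 < p → p ≤ c → G p ≤ a := by
    intro p h1 h2
    rcases le_or_gt p (-c) with hpc | hpc
    · exact mono1.monotoneOn ⟨h1, hpc⟩ ⟨by linarith, le_refl _⟩ hpc
    · exact anti.antitoneOn ⟨le_refl _, by linarith⟩ ⟨hpc.le, h2⟩ hpc.le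
  -- big point
  have hbig : ∀ q : ℝ, ∃ t, c < t ∧ t < 1 ∧ q < G t ∧ a < G t := by
    intro q
    set m : ℝ := max q a with hmdef
    set x : ℝ := β * (m + b + 1) with hxdef
    set t : ℝ := Real.tanh x with htdef
    have ht1 : t < 1 := tanh_lt_one' x
    have htm1 : -1 < t := neg_one_lt_tanh' x
    have hGt : G t = x/β - b * t := by
      simp [hGdef, Gfun, htdef, artanh_tanh']
    have hxb : x/β = m + b + 1 := by rw [hxdef]; field_simp
    have h4 : m < G t := by
      rw [hGt, hxb]
      nlinarith [mul_lt_mul_of_pos_left ht1 hb]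
    have hat : a < G t := lt_of_le_of_lt (le_max_right q a) h4
    have hqt : q < G t := lt_of_le_of_lt (le_max_left q a) h4
    have htc : c < t := by
      by_contra hle
      push_neg at hle
      have := hub t htm1 hle
      linarith
    exact ⟨t, htc, ht1, hqt, hat⟩
  -- unique solution for q > a
  have claim1 : ∀ q, a < q → ∃! p, -1 < p ∧ p < 1 ∧ G p = q := by
    intro q hq
    obtain ⟨t, htc, ht1, hqt, _⟩ := hbig q
    have hcont' : ContinuousOn G (Icc c t) :=
      fun y hy => (hcont y (by linarith [hy.1]) (by linarith [hy.2])).continuousWithinAt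
    have hmem : q ∈ Icc (G c) (G t) := ⟨by rw [hGc]; linarith, hqt.le⟩
    obtain ⟨p, hp, hpq⟩ := intermediate_value_Icc htc.le hcont' hmem
    have hpc : c < p := by
      rcases eq_or_lt_of_le hp.1 with e | e
      · exfalso; rw [← e, hGc] at hpq; linarith
      · exact e
    have hp1 : p < 1 := lt_of_le_of_lt hp.2 ht1
    refine ⟨p, ⟨by linarith, hp1, hpq⟩, ?_⟩
    rintro p' ⟨h1', h2', hq'⟩
    have hpc' : c < p' := by
      by_contra hle
      push_neg at hle
      have := hub p' h1' hle
      rw [hq'] at this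
      linarith
    exact mono2.injOn ⟨hpc'.le, h2'⟩ ⟨hpc.le, hp1⟩ (hq'.trans hpq.symm)
  refine ⟨a, ha0, ?_, ?_⟩
  · -- |q| > a : unique solution
    intro q hq
    rcases lt_abs.mp hq with hq1 | hq1
    · obtain ⟨p, hp, huniq⟩ := claim1 q hq1
      exact ⟨p, (key_iff b β hβ p q).mpr hp,
        fun p' hp' => huniq p' ((key_iff b β hβ p' q).mp hp')⟩
    · obtain ⟨p, hp, huniq⟩ := claim1 (-q) hq1
      refine ⟨-p, (key_iff b β hβ (-p) q).mpr ⟨by linarith [hp.2.1], by linarith [hp.1], ?_⟩, ?_⟩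
      · show G (-p) = q
        rw [hGneg]; linarith [hp.2.2]
      · intro p' hp'
        obtain ⟨h1', h2', hq'⟩ := (key_iff b β hβ p' q).mp hp'
        have hq'' : G p' = q := hq'
        have : -p' = p := huniq (-p') ⟨by linarith, by linarith, by rw [hGneg, hq'']⟩
        linarith
  · -- |q| < a : three solutions
    intro q hq
    obtain ⟨hqa1, hqa2⟩ := abs_lt.mp hq
    -- p₃ ∈ (c,1)
    obtain ⟨t, htc, ht1, hqt, _⟩ := hbig q
    have hcont3 : ContinuousOn G (Icc c t) :=
      fun y hy => (hcont y (by linarith [hy.1]) (by linarith [hy.2])).continuousWithinAt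
    have hmem3 : q ∈ Icc (G c) (G t) := ⟨by rw [hGc]; linarith, hqt.le⟩
    obtain ⟨p₃, hp₃, hpq₃⟩ := intermediate_value_Icc htc.le hcont3 hmem3
    have hp₃c : c < p₃ := by
      rcases eq_or_lt_of_le hp₃.1 with e | e
      · exfalso; rw [← e, hGc] at hpq₃; linarith
      · exact e
    have hp₃1 : p₃ < 1 := lt_of_le_of_lt hp₃.2 ht1
    -- p₁ ∈ (-1,-c)
    obtain ⟨s, hsc, hs1, hqs, _⟩ := hbig (-q)
    have hu1 : (-1:ℝ) < -s := by linarith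
    have huc : -s < -c := by linarith
    have hcont1 : ContinuousOn G (Icc (-s) (-c)) :=
      fun y hy => (hcont y (by linarith [hy.1]) (by linarith [hy.2])).continuousWithinAt
    have hGu : G (-s) < q := by
      rw [hGneg]; linarith
    have hmem1 : q ∈ Icc (G (-s)) (G (-c)) := ⟨hGu.le, by rw [← hadef]; linarith⟩
    obtain ⟨p₁, hp₁, hpq₁⟩ := intermediate_value_Icc huc.le hcont1 hmem1
    have hp₁c : p₁ < -c := by
      rcases eq_or_lt_of_le hp₁.2 with e | e
      · exfalso
        have e2 : G (-c) = q := by rw [← e]; exact hpq₁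
        rw [← hadef] at e2; linarith
      · exact e
    have hp₁1 : -1 < p₁ := by linarith [hp₁.1]
    -- p₂ ∈ (-c,c)
    have hcont2 : ContinuousOn G (Icc (-c) c) :=
      fun y hy => (hcont y (by linarith [hy.1]) (by linarith [hy.2])).continuousWithinAt
    have hmem2 : q ∈ Icc (G c) (G (-c)) := ⟨by rw [hGc]; linarith, by rw [← hadef]; linarith⟩
    obtain ⟨p₂, hp₂, hpq₂⟩ := intermediate_value_Icc' (by linarith : (-c:ℝ) ≤ c) hcont2 hmem2
    have hp₂l : -c < p₂ := by
      rcases eq_or_lt_of_le hp₂.1 with e | e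
      · exfalso
        have e2 : G (-c) = q := by rw [e]; exact hpq₂
        rw [← hadef] at e2; linarith
      · exact e
    have hp₂r : p₂ < c := by
      rcases eq_or_lt_of_le hp₂.2 with e | e
      · exfalso
        have e2 : G c = q := by rw [← e]; exact hpq₂
        rw [hGc] at e2; linarith
      · exact e
    refine ⟨p₁, p₂, p₃, by linarith, by linarith,
      (key_iff b β hβ p₁ q).mpr ⟨hp₁1, by linarith, hpq₁⟩,
      (key_iff b β hβ p₂ q).mpr ⟨by linarith, by linarith, hpq₂⟩,
      (key_iff b β hβ p₃ q).mpr ⟨by linarith, hp₃1, hpq₃⟩, ?_⟩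
    intro p hp
    obtain ⟨h1, h2, hGp⟩ := (key_iff b β hβ p q).mp hp
    rcases le_or_gt p (-c) with hcase1 | hcase1
    · left
      exact mono1.injOn ⟨h1, hcase1⟩ ⟨hp₁1, hp₁c.le⟩ (hGp.trans hpq₁.symm)
    rcases le_or_gt p c with hcase2 | hcase2
    · right; left
      exact anti.injOn ⟨hcase1.le, hcase2⟩ ⟨hp₂l.le, hp₂r.le⟩ (hGp.trans hpq₂.symm)
    · right; right
      exact mono2.injOn ⟨hcase2.le, h2⟩ ⟨hp₃c.le, hp₃1⟩ (hGp.trans hpq₃.symm)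
end

section
/- Let φ : ℝ → ℝ be twice continuously differentiable, let σ ∈ ℝ, and let a > b > 0. Consider the contact Hamiltonian H(p, q, z) = −a(z − φ(q)) + b(p − φ'(q))(q − σ) on ℝ³ and the associated contact Hamiltonian system ṗ = ∂H/∂q + p·∂H/∂z, q̇ = −∂H/∂p, ż = H − p·∂H/∂p. Then every solution (p(t), q(t), z(t)) defined for all t ≥ 0 converges, as t → +∞, to the point (φ'(σ), σ, φ(σ)); moreover q(t) = σ + (q(0) − σ)e^{−bt}, so that if q(0) < σ then the entropy q(t) is strictly increasing. -/
open Filter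

lemma decay_aux (c : ℝ) (f : ℝ → ℝ)
    (hf : ∀ t ∈ Set.Ici (0:ℝ), HasDerivWithinAt f (-c * f t) (Set.Ici 0) t) :
    ∀ t ∈ Set.Ici (0:ℝ), f t = f 0 * Real.exp (-c * t) := by
  intro t ht
  have key : ∀ x ∈ Set.Icc (0:ℝ) t, f x * Real.exp (c * x) = f 0 * Real.exp (c * 0) := by
    apply constant_of_has_deriv_right_zero
    · exact fun x hx => ((hf x hx.1).continuousWithinAt.mono
        (fun y hy => hy.1)).mul (Real.continuous_exp.comp (continuous_const.mul continuous_id)).continuousWithinAt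
    · intro x hx
      have h1 : HasDerivWithinAt f (-c * f x) (Set.Ici x) x :=
        (hf x hx.1).mono (Set.Ici_subset_Ici.mpr hx.1)
      have h2 : HasDerivWithinAt (fun y => Real.exp (c * y)) (c * Real.exp (c * x)) (Set.Ici x) x := by
        have h3 : HasDerivAt (fun y => Real.exp (c * y)) (Real.exp (c*x) * (c*1)) x :=
          (Real.hasDerivAt_exp (c*x)).comp x ((hasDerivAt_id x).const_mul c)
        rw [mul_one, mul_comm (Real.exp _)] at h3
        exact h3.hasDerivWithinAt
      have := h1.mul h2
      exact this.congr_deriv (by ring)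
  have h := key t ⟨ht, le_refl t⟩
  have hexp : Real.exp (c * t) ≠ 0 := Real.exp_ne_zero _
  have : f t = f 0 * Real.exp (c * 0) / Real.exp (c * t) := by
    field_simp at h ⊢; linarith [h]
  rw [this]
  rw [mul_div_assoc, ← Real.exp_sub]
  ring_nf

lemma exp_neg_tendsto (c : ℝ) (hc : 0 < c) :
    Tendsto (fun t => Real.exp (-c * t)) atTop (nhds 0) := by
  have h1 : Tendsto (fun t : ℝ => c * t) atTop atTop :=
    Tendsto.const_mul_atTop hc tendsto_id
  have := Real.tendsto_exp_neg_atTop_nhds_zero.comp h1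
  exact this.congr fun t => by simp [Function.comp]

/-- Newton's law of cooling via the contact Hamiltonian
`H(p,q,z) = -a(z - φ(q)) + b(p - φ'(q))(q - σ)` with `a > b > 0`:
every solution of the contact Hamiltonian system
`ṗ = ∂H/∂q + p ∂H/∂z`, `q̇ = -∂H/∂p`, `ż = H - p ∂H/∂p`
defined for all `t ≥ 0` converges to the equilibrium `(φ'(σ), σ, φ(σ))`;
moreover `q(t) = σ + (q(0) - σ) e^{-bt}`, so if `q(0) < σ` then the entropy
`q(t)` is strictly increasing. -/
theorem newton_cooling (φ : ℝ → ℝ) (hφ : ContDiff ℝ 2 φ) (σ a b : ℝ)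
    (hab : b < a) (hb : 0 < b) (p q z : ℝ → ℝ)
    (hp : ∀ t ∈ Set.Ici (0 : ℝ), HasDerivWithinAt p
      ((a * deriv φ (q t) - b * deriv (deriv φ) (q t) * (q t - σ)
          + b * (p t - deriv φ (q t))) + p t * (-a)) (Set.Ici 0) t)
    (hq : ∀ t ∈ Set.Ici (0 : ℝ), HasDerivWithinAt q
      (-(b * (q t - σ))) (Set.Ici 0) t)
    (hz : ∀ t ∈ Set.Ici (0 : ℝ), HasDerivWithinAt z
      ((-a * (z t - φ (q t)) + b * (p t - deriv φ (q t)) * (q t - σ))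
        - p t * (b * (q t - σ))) (Set.Ici 0) t) :
    Tendsto (fun t => (p t, q t, z t)) atTop (nhds (deriv φ σ, σ, φ σ)) ∧
    (∀ t ∈ Set.Ici (0 : ℝ), q t = σ + (q 0 - σ) * Real.exp (-b * t)) ∧
    (q 0 < σ → StrictMonoOn q (Set.Ici 0)) := by
  -- regularity of φ
  have hφ2 : ContDiff ℝ (1 + 1 : ℕ) φ := by exact_mod_cast hφ
  have hpair := (contDiff_succ_iff_deriv (n := 1)).mp hφ2
  have hφd : Differentiable ℝ φ := hpair.1
  have hdφ : ContDiff ℝ 1 (deriv φ) := hpair.2.2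
  have hdφd : Differentiable ℝ (deriv φ) := hdφ.differentiable one_ne_zero
  -- Q
  have hQ : ∀ t ∈ Set.Ici (0:ℝ), q t - σ = (q 0 - σ) * Real.exp (-b * t) := by
    apply decay_aux
    intro t ht
    have := (hq t ht).sub_const σ
    exact this.congr_deriv (by ring)
  -- composition derivatives
  have hcomp1 : ∀ t ∈ Set.Ici (0:ℝ), HasDerivWithinAt (fun s => deriv φ (q s))
      (deriv (deriv φ) (q t) * (-(b * (q t - σ)))) (Set.Ici 0) t := by
    intro t ht
    exact ((hdφd (q t)).hasDerivAt).comp_hasDerivWithinAt t (hq t ht)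
  have hcomp2 : ∀ t ∈ Set.Ici (0:ℝ), HasDerivWithinAt (fun s => φ (q s))
      (deriv φ (q t) * (-(b * (q t - σ)))) (Set.Ici 0) t := by
    intro t ht
    exact ((hφd (q t)).hasDerivAt).comp_hasDerivWithinAt t (hq t ht)
  -- P
  have hP : ∀ t ∈ Set.Ici (0:ℝ), p t - deriv φ (q t)
      = (p 0 - deriv φ (q 0)) * Real.exp (-(a - b) * t) := by
    apply decay_aux
    intro t ht
    have := (hp t ht).sub (hcomp1 t ht)
    exact this.congr_deriv (by ring)
  -- Z
  have hZ : ∀ t ∈ Set.Ici (0:ℝ), z t - φ (q t)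
      = (z 0 - φ (q 0)) * Real.exp (-a * t) := by
    apply decay_aux
    intro t ht
    have := (hz t ht).sub (hcomp2 t ht)
    exact this.congr_deriv (by ring)
  have hqform : ∀ t ∈ Set.Ici (0:ℝ), q t = σ + (q 0 - σ) * Real.exp (-b * t) := by
    intro t ht; have := hQ t ht; linarith
  refine ⟨?_, hqform, ?_⟩
  · -- limits
    have ha : (0:ℝ) < a := hb.trans hab
    have tq : Tendsto q atTop (nhds σ) := by
      have : Tendsto (fun t => σ + (q 0 - σ) * Real.exp (-b * t)) atTop (nhds (σ + (q 0 - σ) * 0)) :=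
        tendsto_const_nhds.add (tendsto_const_nhds.mul (exp_neg_tendsto b hb))
      rw [show σ + (q 0 - σ) * 0 = σ by ring] at this
      exact this.congr' ((eventually_ge_atTop 0).mono fun t ht => (hqform t ht).symm)
    have tP : Tendsto (fun t => p t - deriv φ (q t)) atTop (nhds 0) := by
      have : Tendsto (fun t => (p 0 - deriv φ (q 0)) * Real.exp (-(a-b) * t)) atTop
          (nhds ((p 0 - deriv φ (q 0)) * 0)) :=
        tendsto_const_nhds.mul (exp_neg_tendsto (a-b) (by linarith))
      rw [mul_zero] at this
      exact this.congr' ((eventually_ge_atTop 0).mono fun t ht => (hP t ht).symm)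
    have tZ : Tendsto (fun t => z t - φ (q t)) atTop (nhds 0) := by
      have : Tendsto (fun t => (z 0 - φ (q 0)) * Real.exp (-a * t)) atTop
          (nhds ((z 0 - φ (q 0)) * 0)) :=
        tendsto_const_nhds.mul (exp_neg_tendsto a ha)
      rw [mul_zero] at this
      exact this.congr' ((eventually_ge_atTop 0).mono fun t ht => (hZ t ht).symm)
    have tdq : Tendsto (fun t => deriv φ (q t)) atTop (nhds (deriv φ σ)) :=
      (hdφ.continuous.tendsto σ).comp tq
    have tfq : Tendsto (fun t => φ (q t)) atTop (nhds (φ σ)) :=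
      (hφ.continuous.tendsto σ).comp tq
    have tp : Tendsto p atTop (nhds (deriv φ σ)) := by
      have := tP.add tdq
      rw [zero_add] at this
      exact this.congr fun t => by ring
    have tz : Tendsto z atTop (nhds (φ σ)) := by
      have := tZ.add tfq
      rw [zero_add] at this
      exact this.congr fun t => by ring
    exact tp.prodMk_nhds (tq.prodMk_nhds tz)
  · -- strict monotonicity
    intro hq0 s hs t ht hst
    rw [hqform s hs, hqform t ht]
    have hexp : Real.exp (-b * t) < Real.exp (-b * s) :=
      Real.exp_lt_exp.mpr (by nlinarith)
    nlinarith [sub_neg.mpr hq0]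
end

section
/- Let a, ε, N > 0 with εN < a, and let k ∈ ℤ. Suppose (P, Q, Z) : [0, ∞) → ℝ³ is differentiable and satisfies Ṗ = −(a + εN·sin(2NQ))·P, Q̇ = ε·sin²(NQ), Ż = −aZ, with Q(0) ∈ (πk/N, π(k+1)/N). Then Q(t) is strictly increasing and converges to π(k+1)/N as t → +∞, while P(t) → 0 and Z(t) → 0 as t → +∞. -/
open Filter

set_option maxHeartbeats 1000000

/-- Relaxation with small total entropy increment: for the contact Hamiltonian
system `Ṗ = -(a + εN sin(2NQ)) P`, `Q̇ = ε sin²(NQ)`, `Ż = -aZ` with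
`a, ε, N > 0`, `εN < a`, any solution on `[0,∞)` with
`Q(0) ∈ (πk/N, π(k+1)/N)` has strictly increasing `Q(t)` converging to
`π(k+1)/N`, while `P(t) → 0` and `Z(t) → 0` as `t → +∞`. -/
theorem entropy_increasing_relaxation (a ε N : ℝ) (ha : 0 < a) (hε : 0 < ε)
    (hN : 0 < N) (hεN : ε * N < a) (k : ℤ) (P Q Z : ℝ → ℝ)
    (hP : ∀ t ∈ Set.Ici (0 : ℝ), HasDerivWithinAt P
      (-(a + ε * N * Real.sin (2 * N * Q t)) * P t) (Set.Ici 0) t)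
    (hQ : ∀ t ∈ Set.Ici (0 : ℝ), HasDerivWithinAt Q
      (ε * Real.sin (N * Q t) ^ 2) (Set.Ici 0) t)
    (hZ : ∀ t ∈ Set.Ici (0 : ℝ), HasDerivWithinAt Z (-a * Z t) (Set.Ici 0) t)
    (hQ0 : Q 0 ∈ Set.Ioo (Real.pi * (k : ℝ) / N) (Real.pi * ((k : ℝ) + 1) / N)) :
    StrictMonoOn Q (Set.Ici 0) ∧
    Tendsto Q atTop (nhds (Real.pi * ((k : ℝ) + 1) / N)) ∧
    Tendsto P atTop (nhds 0) ∧
    Tendsto Z atTop (nhds 0) := by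
  have hπ := Real.pi_pos
  set π := Real.pi
  obtain ⟨hQ0l, hQ0r⟩ := hQ0
  -- θ₀ lies in (-π/2, π/2)
  have hθ0l : -(π / 2) < N * Q 0 - π * k - π / 2 := by
    have := (div_lt_iff₀ hN).1 hQ0l
    nlinarith
  have hθ0r : N * Q 0 - π * k - π / 2 < π / 2 := by
    have := (lt_div_iff₀ hN).1 hQ0r
    nlinarith
  set A := Real.tan (N * Q 0 - π * k - π / 2) with hA
  set G : ℝ → ℝ := fun t => (π * k + π / 2 + Real.arctan (A + ε * N * t)) / N with hG
  have hG0 : G 0 = Q 0 := by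
    simp only [hG, mul_zero, add_zero, hA, Real.arctan_tan hθ0l hθ0r]
    field_simp
    ring
  -- G solves the same ODE
  have hsinsq : ∀ u : ℝ, Real.sin (N * G u) ^ 2 = 1 / (1 + (A + ε * N * u) ^ 2) := by
    intro u
    have hNG : N * G u = (k : ℝ) * π + (Real.arctan (A + ε * N * u) + π / 2) := by
      simp only [hG]
      field_simp
      ring
    rw [hNG, Real.sin_add, Real.sin_int_mul_pi, Real.sin_add_pi_div_two, zero_mul, zero_add,
      Real.cos_arctan]
    have h1 : (0:ℝ) < 1 + (A + ε * N * u) ^ 2 := by positivity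
    rw [mul_pow, div_pow, one_pow, Real.sq_sqrt h1.le]
    have : Real.cos ((k:ℝ) * π) ^ 2 = 1 := by
      have := Real.abs_cos_int_mul_pi k
      nlinarith [abs_nonneg (Real.cos ((k:ℝ) * π)), sq_abs (Real.cos ((k:ℝ)*π))]
    rw [this, one_mul]
  have hGderiv : ∀ t : ℝ, HasDerivAt G (ε * Real.sin (N * G t) ^ 2) t := by
    intro t
    have h1 : HasDerivAt (fun s => A + ε * N * s) (ε * N) t := by
      simpa using ((hasDerivAt_id t).const_mul (ε * N)).const_add A
    have h2 : HasDerivAt (fun s => Real.arctan (A + ε * N * s))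
        ((1 + (A + ε * N * t) ^ 2)⁻¹ * (ε * N)) t := by
      exact (Real.hasDerivAt_arctan' (A + ε * N * t)).comp t h1
    have h3 := (h2.const_add (π * k + π / 2)).div_const N
    refine h3.congr_deriv ?_
    rw [hsinsq t]
    field_simp
  -- uniqueness: Q = G on [0, ∞)
  have hLip : ∀ s : ℝ, LipschitzWith (2 * ε * N).toNNReal
      (fun x => ε * Real.sin (N * x) ^ 2) := by
    intro s
    have hd : ∀ x : ℝ, HasDerivAt (fun x => ε * Real.sin (N * x) ^ 2)
        (ε * (2 * Real.sin (N * x) * (Real.cos (N * x) * N))) x := by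
      intro x
      have h1 : HasDerivAt (fun y : ℝ => N * y) N x := by
        simpa using (hasDerivAt_id x).const_mul N
      have h2 : HasDerivAt (fun y : ℝ => Real.sin (N * y)) (Real.cos (N * x) * N) x := by
        exact (Real.hasDerivAt_sin (N * x)).comp x h1
      have h3 := (h2.pow 2).const_mul ε
      refine h3.congr_deriv ?_
      norm_num
    have := lipschitzOnWith_univ.1 <|
      (convex_univ (𝕜 := ℝ) (E := ℝ)).lipschitzOnWith_of_nnnorm_hasDerivWithin_le
        (C := (2 * ε * N).toNNReal)
        (fun x _ => (hd x).hasDerivWithinAt) (fun x _ => by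
          rw [← NNReal.coe_le_coe, coe_nnnorm, Real.norm_eq_abs,
            Real.coe_toNNReal _ (by positivity)]
          have hs := Real.neg_one_le_sin (N * x)
          have hs' := Real.sin_le_one (N * x)
          have hc := Real.neg_one_le_cos (N * x)
          have hc' := Real.cos_le_one (N * x)
          rw [abs_le]
          have hs2 : Real.sin (N*x) ^ 2 ≤ 1 := Real.sin_sq_le_one _
          have hc2 : Real.cos (N*x) ^ 2 ≤ 1 := Real.cos_sq_le_one _
          have h4 : -1 ≤ Real.sin (N*x) * Real.cos (N*x) := by
            nlinarith [sq_nonneg (Real.sin (N*x) + Real.cos (N*x))]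
          have h5 : Real.sin (N*x) * Real.cos (N*x) ≤ 1 := by
            nlinarith [sq_nonneg (Real.sin (N*x) - Real.cos (N*x))]
          have hpos : (0:ℝ) ≤ 2 * ε * N := by positivity
          constructor
          · nlinarith [mul_le_mul_of_nonneg_left h4 hpos]
          · nlinarith [mul_le_mul_of_nonneg_left h5 hpos])
    exact this
  have hQG : ∀ t ∈ Set.Ici (0:ℝ), Q t = G t := by
    intro b hb
    have := ODE_solution_unique (v := fun _ x => ε * Real.sin (N * x) ^ 2)
      (K := (2 * ε * N).toNNReal) (f := Q) (g := G) (a := 0) (b := b)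
      hLip
      (fun x hx => ((hQ x hx.1).continuousWithinAt).mono Set.Icc_subset_Ici_self)
      (fun t ht => (hQ t ht.1).mono (Set.Ici_subset_Ici.2 ht.1))
      (fun x _ => (hGderiv x).continuousAt.continuousWithinAt)
      (fun t _ => (hGderiv t).hasDerivWithinAt)
      hG0.symm
    exact this (Set.right_mem_Icc.2 hb)
  -- conclusions about Q
  have hQmono : StrictMonoOn Q (Set.Ici 0) := by
    intro s hs t ht hst
    rw [hQG s hs, hQG t ht]
    simp only [hG]
    refine (div_lt_div_iff_of_pos_right hN).2 ?_
    refine add_lt_add_right (Real.arctan_strictMono ?_) _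
    nlinarith [mul_lt_mul_of_pos_left hst (show (0:ℝ) < ε * N by positivity)]
  have hQtend : Tendsto Q atTop (nhds (π * ((k : ℝ) + 1) / N)) := by
    have h1 : Tendsto (fun t => A + ε * N * t) atTop atTop := by
      apply tendsto_atTop_add_const_left
      exact Tendsto.const_mul_atTop (by positivity) tendsto_id
    have h2 : Tendsto (fun t => Real.arctan (A + ε * N * t)) atTop (nhds (π / 2)) :=
      (Real.tendsto_arctan_atTop.mono_right nhdsWithin_le_nhds).comp h1
    have h3 := (h2.const_add (π * k + π / 2)).div_const N
    have h4 : (π * k + π / 2 + π / 2) / N = π * ((k : ℝ) + 1) / N := by ring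
    rw [h4] at h3
    refine h3.congr' ?_
    filter_upwards [eventually_ge_atTop (0:ℝ)] with t ht
    exact (hQG t ht).symm
  -- Z part
  have hZeq : ∀ t ∈ Set.Ici (0:ℝ), Z t = Z 0 * Real.exp (-(a * t)) := by
    intro t ht
    have key : ∀ x ∈ Set.Icc (0:ℝ) t, Z x * Real.exp (a * x) = Z 0 * Real.exp (a * 0) := by
      apply constant_of_has_deriv_right_zero
      · intro x hx
        exact ((hZ x hx.1).continuousWithinAt.mono Set.Icc_subset_Ici_self).mul
          (by fun_prop : Continuous fun s : ℝ => Real.exp (a * s)).continuousWithinAt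
      · intro x hx
        have hexp : HasDerivAt (fun s => Real.exp (a * s)) (Real.exp (a * x) * a) x := by
          have h1 : HasDerivAt (fun y : ℝ => a * y) a x := by
            simpa using (hasDerivAt_id x).const_mul a
          exact (Real.hasDerivAt_exp (a * x)).comp x h1
        have h2 := (hZ x hx.1).mono (Set.Ici_subset_Ici.2 hx.1)
        have := h2.mul (hexp.hasDerivWithinAt (s := Set.Ici x))
        exact this.congr_deriv (by ring)
    have := key t (Set.mem_Icc.2 ⟨ht, le_refl t⟩)
    rw [mul_zero, Real.exp_zero, mul_one] at this
    rw [Real.exp_neg]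
    field_simp
    linarith [this, Real.exp_pos (a * t)]
  have hZtend : Tendsto Z atTop (nhds 0) := by
    have h1 : Tendsto (fun t => Z 0 * Real.exp (-(a * t))) atTop (nhds 0) := by
      have h0 : Tendsto (fun t : ℝ => Z 0 * Real.exp (-(a * t))) atTop (nhds (Z 0 * 0)) :=
        ((Real.tendsto_exp_neg_atTop_nhds_zero.comp
          (Tendsto.const_mul_atTop ha tendsto_id)).const_mul _).congr (fun t => by
            simp [Function.comp])
      simpa using h0
    refine h1.congr' ?_
    filter_upwards [eventually_ge_atTop (0:ℝ)] with t ht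
    exact (hZeq t ht).symm
  -- P part
  set lam := a - ε * N with hlam
  have hlampos : 0 < lam := by simp [hlam]; linarith
  have hPbound : ∀ t ∈ Set.Ici (0:ℝ), P t ^ 2 * Real.exp (2 * lam * t) ≤ P 0 ^ 2 := by
    have hanti : AntitoneOn (fun t => P t ^ 2 * Real.exp (2 * lam * t)) (Set.Ici 0) := by
      apply antitoneOn_of_deriv_nonpos (convex_Ici 0)
      · exact (ContinuousOn.pow (fun x hx => (hP x hx).continuousWithinAt) 2).mul
          (Real.continuous_exp.comp (continuous_const.mul continuous_id)).continuousOn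
      · intro x hx
        rw [interior_Ici] at hx
        have hPx := (hP x (Set.mem_Ici.2 (le_of_lt hx))).hasDerivAt (Ici_mem_nhds hx)
        exact ((hPx.differentiableAt.pow 2).mul
          ((by fun_prop : Differentiable ℝ fun s : ℝ => Real.exp (2 * lam * s)) x)).differentiableWithinAt
      · intro x hx
        rw [interior_Ici] at hx
        have hPx : HasDerivAt P (-(a + ε * N * Real.sin (2 * N * Q x)) * P x) x :=
          (hP x (Set.mem_Ici.2 (le_of_lt hx))).hasDerivAt (Ici_mem_nhds hx)
        have hexp : HasDerivAt (fun s => Real.exp (2 * lam * s))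
            (Real.exp (2 * lam * x) * (2 * lam)) x := by
          have h1 : HasDerivAt (fun y : ℝ => 2 * lam * y) (2 * lam) x := by
            simpa using (hasDerivAt_id x).const_mul (2 * lam)
          exact (Real.hasDerivAt_exp (2 * lam * x)).comp x h1
        have hprod := (hPx.pow 2).mul hexp
        rw [show deriv (fun t => P t ^ 2 * Real.exp (2 * lam * t)) x = _ from hprod.deriv]
        simp only [hlam]
        have hsin := Real.neg_one_le_sin (2 * N * Q x)
        have hexppos := Real.exp_pos (2 * (a - ε * N) * x)
        have hsq := sq_nonneg (P x)
        have h1 : (0:ℝ) ≤ 1 + Real.sin (2 * N * Q x) := by linarith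
        have h2 : (0:ℝ) ≤ ε * N * (1 + Real.sin (2 * N * Q x)) * P x ^ 2 *
            Real.exp (2 * (a - ε * N) * x) :=
          mul_nonneg (mul_nonneg (mul_nonneg (mul_nonneg hε.le hN.le) h1) hsq) hexppos.le
        norm_num
        nlinarith [h2]
    intro t ht
    have := hanti (Set.mem_Ici.2 le_rfl) ht ht
    simpa using this
  have hPtend : Tendsto P atTop (nhds 0) := by
    refine squeeze_zero_norm' (a := fun t => |P 0| * Real.exp (-(lam * t))) ?_ ?_
    · filter_upwards [eventually_ge_atTop (0:ℝ)] with t ht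
      have hb := hPbound t ht
      have hexppos := Real.exp_pos (2 * lam * t)
      have h1 : P t ^ 2 ≤ P 0 ^ 2 * Real.exp (-(2 * lam * t)) := by
        rw [Real.exp_neg, ← div_eq_mul_inv, le_div_iff₀ hexppos]
        exact hb
      have h2 : P 0 ^ 2 * Real.exp (-(2 * lam * t)) = (|P 0| * Real.exp (-(lam * t))) ^ 2 := by
        rw [mul_pow, sq_abs, ← Real.exp_nat_mul]
        ring_nf
      rw [h2] at h1
      have h3 := Real.sqrt_le_sqrt h1
      rw [Real.sqrt_sq_eq_abs, Real.sqrt_sq (by positivity)] at h3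
      simpa [Real.norm_eq_abs] using h3
    · have h0 : Tendsto (fun t : ℝ => |P 0| * Real.exp (-(lam * t))) atTop (nhds (|P 0| * 0)) :=
        ((Real.tendsto_exp_neg_atTop_nhds_zero.comp
          (Tendsto.const_mul_atTop hlampos tendsto_id)).const_mul _).congr (fun t => by
            simp [Function.comp])
      simpa using h0
  exact ⟨hQmono, hQtend, hPtend, hZtend⟩
end

section
/- Let a, b ∈ ℝ and α, β > 0, and suppose P, Z : ℝ → ℝ satisfy, for every Q ∈ ℝ, the equations P(Q) − tanh(αQ + α(a−b)(P(Q) + tanh(βQ))) + tanh(βQ) = 0 and Z(Q) − α^{−1}·log(2·cosh(αQ + α(a−b)(P(Q) + tanh(βQ)))) + β^{−1}·log(2·cosh(βQ)) + (1/2)(a−b)(P(Q) + tanh(βQ))² = 0. Then P(Q) → 0 and Z(Q) → (a−b)/2 as Q → +∞. -/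
open Filter

private lemma tanh_formula (x : ℝ) :
    Real.tanh x = (1 - Real.exp (-2 * x)) / (1 + Real.exp (-2 * x)) := by
  rw [Real.tanh_eq_sinh_div_cosh, Real.sinh_eq, Real.cosh_eq,
    div_eq_div_iff (by positivity) (by positivity)]
  have e1 : Real.exp x * Real.exp (-2 * x) = Real.exp (-x) := by
    rw [← Real.exp_add]; ring_nf
  have e2 : Real.exp (-x) * Real.exp (-2 * x) = Real.exp (-3 * x) := by
    rw [← Real.exp_add]; ring_nf
  nlinarith [e1, e2]

private lemma abs_tanh_le_one (x : ℝ) : |Real.tanh x| ≤ 1 := by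
  rw [tanh_formula, abs_div, abs_of_pos (show (0:ℝ) < 1 + Real.exp (-2*x) by positivity),
    div_le_one (by positivity)]
  have := Real.exp_pos (-2 * x)
  rw [abs_le]; constructor <;> nlinarith

private lemma tendsto_exp_neg_two : Tendsto (fun x : ℝ => Real.exp (-2 * x)) atTop (nhds 0) := by
  apply Real.tendsto_exp_atBot.comp
  have h2x : Tendsto (fun x : ℝ => 2 * x) atTop atTop :=
    tendsto_id.const_mul_atTop (by norm_num : (0:ℝ) < 2)
  have := tendsto_neg_atBot_iff.mpr h2x
  exact this.congr (fun x => by ring)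

private lemma tendsto_tanh : Tendsto Real.tanh atTop (nhds 1) := by
  have h := tendsto_exp_neg_two
  have hd : Tendsto (fun x : ℝ => (1 - Real.exp (-2 * x)) / (1 + Real.exp (-2 * x))) atTop
      (nhds ((1 - 0) / (1 + 0))) :=
    (tendsto_const_nhds.sub h).div (tendsto_const_nhds.add h) (by norm_num)
  have h10 : ((1:ℝ) - 0) / (1 + 0) = 1 := by norm_num
  rw [h10] at hd
  exact hd.congr fun x => (tanh_formula x).symm

private lemma log_two_cosh (x : ℝ) :
    Real.log (2 * Real.cosh x) = x + Real.log (1 + Real.exp (-2 * x)) := by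
  have h : 2 * Real.cosh x = Real.exp x * (1 + Real.exp (-2 * x)) := by
    rw [Real.cosh_eq]
    have : Real.exp x * Real.exp (-2 * x) = Real.exp (-x) := by
      rw [← Real.exp_add]; ring_nf
    nlinarith [this]
  rw [h, Real.log_mul (Real.exp_ne_zero x) (by positivity), Real.log_exp]

private lemma tendsto_logterm :
    Tendsto (fun x : ℝ => Real.log (1 + Real.exp (-2 * x))) atTop (nhds 0) := by
  have hc : ContinuousAt (fun t : ℝ => Real.log (1 + t)) 0 := by
    apply ContinuousAt.log
    · fun_prop
    · norm_num
  have := hc.tendsto.comp tendsto_exp_neg_two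
  simpa [Function.comp_def] using this

/-- Asymptotics of the Legendrian `Λ_{a,α}` at large effective magnetic field:
if `P, Z : ℝ → ℝ` solve the two defining equations of `Λ_{a,α}` in the
coordinates adapted to `Λ_{b,β}` for all `Q`, then `P(Q) → 0` and
`Z(Q) → (a-b)/2` as `Q → +∞`. -/
theorem legendrian_asymptotics (a b α β : ℝ) (hα : 0 < α) (hβ : 0 < β)
    (P Z : ℝ → ℝ)
    (h1 : ∀ Q : ℝ, P Q - Real.tanh (α * Q + α * (a - b) * (P Q + Real.tanh (β * Q)))
      + Real.tanh (β * Q) = 0)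
    (h2 : ∀ Q : ℝ, Z Q
      - α⁻¹ * Real.log (2 * Real.cosh (α * Q + α * (a - b) * (P Q + Real.tanh (β * Q))))
      + β⁻¹ * Real.log (2 * Real.cosh (β * Q))
      + (1 / 2) * (a - b) * (P Q + Real.tanh (β * Q)) ^ 2 = 0) :
    Tendsto P atTop (nhds 0) ∧ Tendsto Z atTop (nhds ((a - b) / 2)) := by
  set A : ℝ → ℝ := fun Q => α * Q + α * (a - b) * (P Q + Real.tanh (β * Q)) with hA
  have hAQ : ∀ Q : ℝ, α * Q + α * (a - b) * (P Q + Real.tanh (β * Q)) = A Q := fun _ => rfl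
  have hM : ∀ Q, P Q + Real.tanh (β * Q) = Real.tanh (A Q) := by
    intro Q; have := h1 Q; rw [hAQ Q] at this; linarith
  -- A tends to atTop
  have hAtop : Tendsto A atTop atTop := by
    refine tendsto_atTop_mono' atTop ?_
      (tendsto_atTop_add_const_right _ (-(α * |a - b|)) (tendsto_id.const_mul_atTop hα))
    · filter_upwards with Q
      have hb1 : |Real.tanh (A Q)| ≤ 1 := abs_tanh_le_one _
      have h3 : α * (a - b) * (P Q + Real.tanh (β * Q)) ≥ - (α * |a - b|) := by
        rw [hM Q]
        have habs : |α * (a - b) * Real.tanh (A Q)| ≤ α * |a - b| := by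
          rw [abs_mul, abs_mul, abs_of_pos hα]
          calc α * |a - b| * |Real.tanh (A Q)| ≤ α * |a - b| * 1 := by
                apply mul_le_mul_of_nonneg_left hb1 (by positivity)
            _ = α * |a - b| := by ring
        linarith [neg_abs_le (α * (a - b) * Real.tanh (A Q))]
      calc α * id Q + -(α * |a - b|)
            ≤ α * Q + α * (a - b) * (P Q + Real.tanh (β * Q)) := by simp only [id]; linarith
        _ = A Q := hAQ Q
  have hβtop : Tendsto (fun Q : ℝ => β * Q) atTop atTop :=
    tendsto_id.const_mul_atTop hβ
  have htA : Tendsto (fun Q => Real.tanh (A Q)) atTop (nhds 1) := tendsto_tanh.comp hAtop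
  have htβ : Tendsto (fun Q => Real.tanh (β * Q)) atTop (nhds 1) := tendsto_tanh.comp hβtop
  have hP : Tendsto P atTop (nhds 0) := by
    have h0 : Tendsto (fun Q => Real.tanh (A Q) - Real.tanh (β * Q)) atTop (nhds (1 - 1)) :=
      htA.sub htβ
    simp only [sub_self] at h0
    refine h0.congr (fun Q => ?_)
    have := hM Q; linarith
  refine ⟨hP, ?_⟩
  -- Z
  have hZeq : ∀ Q, Z Q = (a - b) * Real.tanh (A Q)
      + α⁻¹ * Real.log (1 + Real.exp (-2 * A Q))
      - β⁻¹ * Real.log (1 + Real.exp (-2 * (β * Q)))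
      - (1/2) * (a - b) * (Real.tanh (A Q))^2 := by
    intro Q
    have h2Q := h2 Q
    rw [hAQ Q, hM Q, log_two_cosh (A Q), log_two_cosh (β * Q)] at h2Q
    have hAe : α⁻¹ * A Q = Q + (a - b) * Real.tanh (A Q) := by
      have h' : A Q = α * Q + α * (a - b) * Real.tanh (A Q) := by
        conv_lhs => rw [← hAQ Q]
        rw [hM Q]
      have hα' : α ≠ 0 := ne_of_gt hα
      conv_lhs => rw [h']
      field_simp
    have hβe : β⁻¹ * (β * Q) = Q := by field_simp
    have hs1 : α⁻¹ * (A Q + Real.log (1 + Real.exp (-2 * A Q)))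
        = Q + (a - b) * Real.tanh (A Q) + α⁻¹ * Real.log (1 + Real.exp (-2 * A Q)) := by
      rw [mul_add, hAe]
    have hs2 : β⁻¹ * (β * Q + Real.log (1 + Real.exp (-2 * (β * Q))))
        = Q + β⁻¹ * Real.log (1 + Real.exp (-2 * (β * Q))) := by
      rw [mul_add, hβe]
    rw [hs1, hs2] at h2Q
    linarith
  have hlA : Tendsto (fun Q => Real.log (1 + Real.exp (-2 * A Q))) atTop (nhds 0) :=
    tendsto_logterm.comp hAtop
  have hlβ : Tendsto (fun Q => Real.log (1 + Real.exp (-2 * (β * Q)))) atTop (nhds 0) :=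
    tendsto_logterm.comp hβtop
  have key : Tendsto (fun Q => (a - b) * Real.tanh (A Q)
      + α⁻¹ * Real.log (1 + Real.exp (-2 * A Q))
      - β⁻¹ * Real.log (1 + Real.exp (-2 * (β * Q)))
      - (1/2) * (a - b) * (Real.tanh (A Q))^2) atTop
      (nhds ((a - b) * 1 + α⁻¹ * 0 - β⁻¹ * 0 - (1/2) * (a - b) * 1^2)) :=
    ((((tendsto_const_nhds.mul htA).add (tendsto_const_nhds.mul hlA)).sub
      (tendsto_const_nhds.mul hlβ)).sub (tendsto_const_nhds.mul (htA.pow 2)))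
  have heq : ((a - b) * 1 + α⁻¹ * 0 - β⁻¹ * 0 - (1/2) * (a - b) * 1^2) = (a - b) / 2 := by ring
  rw [heq] at key
  exact key.congr (fun Q => (hZeq Q).symm)
end
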